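/- Let κ ∈ ℝ with κ ≠ 0 and define A(u) = κ u⁻² on the interval (0, ∞). Then A satisfies the differential equation 5 (A'')² − 4 A' A''' + 16 A (A')² = 0 on (0, ∞) if and only if κ = 3/16. -/

import Mathlib

noncomputable section

lemma fun_eq (κ : ℝ) : (fun s : ℝ => κ / s ^ 2) = fun s : ℝ => κ * s ^ (-2 : ℤ) := by
  funext s
  rw [zpow_neg, div_eq_mul_inv, zpow_two]
  norm_num [pow_two]

lemma d1 (κ : ℝ) : deriv (fun s : ℝ => κ / s ^ 2) = fun s : ℝ => (-2 * κ) / s ^ 3 := by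
  rw [fun_eq]
  funext s
  rw [deriv_const_mul_field, deriv_zpow]
  rcases eq_or_ne s 0 with rfl | hs
  · norm_num
  · rw [show (-2 : ℤ) - 1 = -3 by norm_num, zpow_neg, zpow_ofNat]
    push_cast; field_simp

lemma d2 (κ : ℝ) : deriv (deriv (fun s : ℝ => κ / s ^ 2)) = fun s : ℝ => (6 * κ) / s ^ 4 := by
  rw [d1]
  have : (fun s : ℝ => (-2 * κ) / s ^ 3) = fun s : ℝ => (-2 * κ) * s ^ (-3 : ℤ) := by
    funext s; rw [zpow_neg, zpow_ofNat, div_eq_mul_inv]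
  rw [this]
  funext s
  rw [deriv_const_mul_field, deriv_zpow]
  rcases eq_or_ne s 0 with rfl | hs
  · norm_num
  · rw [show (-3 : ℤ) - 1 = -4 by norm_num, zpow_neg, zpow_ofNat]
    push_cast; field_simp; ring

lemma d3 (κ : ℝ) : deriv (deriv (deriv (fun s : ℝ => κ / s ^ 2))) = fun s : ℝ => (-24 * κ) / s ^ 5 := by
  rw [d2]
  have : (fun s : ℝ => (6 * κ) / s ^ 4) = fun s : ℝ => (6 * κ) * s ^ (-4 : ℤ) := by
    funext s; rw [zpow_neg, zpow_ofNat, div_eq_mul_inv]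
  rw [this]
  funext s
  rw [deriv_const_mul_field, deriv_zpow]
  rcases eq_or_ne s 0 with rfl | hs
  · norm_num
  · rw [show (-4 : ℤ) - 1 = -5 by norm_num, zpow_neg, zpow_ofNat]
    push_cast; field_simp; ring

/-- `A(u) = κ u⁻²` (`κ ≠ 0`) satisfies
`5 (A'')² - 4 A' A''' + 16 A (A')² = 0` on `(0,∞)` if and only if `κ = 3/16`. -/
theorem stmt14 (κ : ℝ) (hκ : κ ≠ 0) :
    (∀ u ∈ Set.Ioi (0 : ℝ),
        5 * (deriv (deriv (fun s => κ / s ^ 2)) u) ^ 2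
          - 4 * deriv (fun s => κ / s ^ 2) u
              * deriv (deriv (deriv (fun s => κ / s ^ 2))) u
          + 16 * (κ / u ^ 2) * (deriv (fun s => κ / s ^ 2) u) ^ 2 = 0) ↔
      κ = 3 / 16 := by
  rw [d3, d2, d1]
  constructor
  · intro h
    have h1 := h 1 (by norm_num)
    norm_num at h1
    have hfac : κ ^ 2 * (64 * κ - 12) = 0 := by nlinarith [h1]
    have h2 : κ ^ 2 ≠ 0 := pow_ne_zero 2 hκ
    have := (mul_eq_zero.mp hfac).resolve_left h2
    linarith
  · intro hk u hu
    have hu0 : u ≠ 0 := ne_of_gt hu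
    subst hk
    field_simp
    ring

end
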